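/- Let X be a compact Hausdorff space and F ⊆ C(X, ℝ) a family of continuous functions uniformly bounded by M. Suppose f̄ : X → ℝ is a pointwise cluster point of F (i.e., f̄ lies in the closure of F in ℝ^X with the product topology). If f̄ is continuous, then the double-limit exchange holds: for any sequence (f_i) in F and sequence (v_j) in X, and any ultrafilters 𝒰, 𝒱 on ℕ, if all relevant iterated ultralimits are taken, then 𝒰-lim_i 𝒱-lim_j f_i(v_j) = 𝒱-lim_j 𝒰-lim_i f_i(v_j) whenever 𝒰-lim_i f_i = f̄ pointwise. -/

import Mathlib

open Filter

/-- One direction of Grothendieck's criterion: a continuous pointwise cluster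
point of a uniformly bounded family of continuous functions satisfies the
double-limit exchange property. -/
theorem continuous_cluster_point_limit_exchange {X : Type*} [TopologicalSpace X]
    [CompactSpace X] [T2Space X]
    (M : ℝ) (f : ℕ → X → ℝ) (hfc : ∀ i, Continuous (f i))
    (hfb : ∀ i v, |f i v| ≤ M)
    (fbar : X → ℝ) (hfbarc : Continuous fbar)
    (U V : Ultrafilter ℕ) (v : ℕ → X)
    (hU : ∀ x : X, Tendsto (fun i => f i x) U (nhds (fbar x)))
    (L₁ : ℕ → ℝ) (hL₁ : ∀ i, Tendsto (fun j => f i (v j)) V (nhds (L₁ i)))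
    (a : ℝ) (ha : Tendsto L₁ U (nhds a))
    (L₂ : ℕ → ℝ) (hL₂ : ∀ j, Tendsto (fun i => f i (v j)) U (nhds (L₂ j)))
    (b : ℝ) (hb : Tendsto L₂ V (nhds b)) :
    a = b := by
  -- v converges along V to some x₀ by compactness
  obtain ⟨x₀, hx₀⟩ : ∃ x₀ : X, Tendsto v V (nhds x₀) := by
    obtain ⟨x, -, hx⟩ := (isCompact_univ (X := X)).ultrafilter_le_nhds (V.map v)
      (by simp)
    exact ⟨x, hx⟩
  -- L₁ i = f i x₀
  have h1 : ∀ i, L₁ i = f i x₀ := fun i =>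
    tendsto_nhds_unique (hL₁ i) (((hfc i).continuousAt).tendsto.comp hx₀)
  -- L₂ j = fbar (v j)
  have h2 : ∀ j, L₂ j = fbar (v j) := fun j =>
    tendsto_nhds_unique (hL₂ j) (hU (v j))
  have ha' : a = fbar x₀ := by
    refine tendsto_nhds_unique ha ?_
    simpa [funext h1] using hU x₀
  have hb' : b = fbar x₀ := by
    refine tendsto_nhds_unique hb ?_
    simpa [funext h2, Function.comp_def] using (hfbarc.continuousAt).tendsto.comp hx₀
  rw [ha', hb']
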